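/- Let C > 0 and 0 < α < 1 be constants such that Δ_ρ^S(n) ≤ C n^α and N_ρ^S(n) ≤ exp(C n^α) for all n (for the action of G on the G-orbit of ρ = 1^∞), and let r_n = 2^{⌊n/2⌋}. Then for every sufficiently large n, every ξ_n ∈ {ρ_n, η_n}, and every k ≤ r_n, the action of G_n on X_n with respect to S_n satisfies Δ_{ξ_n}^{S_n}(k) ≤ C k^α and N_{ξ_n}^{S_n}(k) ≤ exp(C k^α). -/

import Mathlib

noncomputable section

/-! ### The Grigorchuk generators -/

namespace Grig

def aFun : List Bool → List Bool
  | [] => []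
  | x :: w => (!x) :: w

mutual
  def bFun : List Bool → List Bool
    | [] => []
    | false :: w => false :: aFun w
    | true :: w => true :: cFun w
  def cFun : List Bool → List Bool
    | [] => []
    | false :: w => false :: aFun w
    | true :: w => true :: dFun w
  def dFun : List Bool → List Bool
    | [] => []
    | false :: w => false :: w
    | true :: w => true :: bFun w
end

theorem aFun_involutive : Function.Involutive aFun := by
  intro w
  match w with
  | [] => rfl
  | x :: w => simp [aFun]

theorem bcd_involutive :
    ∀ w : List Bool, bFun (bFun w) = w ∧ cFun (cFun w) = w ∧ dFun (dFun w) = w := by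
  intro w
  induction w with
  | nil => exact ⟨rfl, rfl, rfl⟩
  | cons x w ih =>
    rcases x with _ | _
    · simp [bFun, cFun, dFun, aFun_involutive w]
    · simp [bFun, cFun, dFun, ih.1, ih.2.1, ih.2.2]

theorem bFun_involutive : Function.Involutive bFun := fun w => (bcd_involutive w).1
theorem cFun_involutive : Function.Involutive cFun := fun w => (bcd_involutive w).2.1
theorem dFun_involutive : Function.Involutive dFun := fun w => (bcd_involutive w).2.2

theorem aFun_length : ∀ w : List Bool, (aFun w).length = w.length := by
  intro w
  match w with
  | [] => rfl
  | x :: w => simp [aFun]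

theorem bcd_length : ∀ w : List Bool,
    (bFun w).length = w.length ∧ (cFun w).length = w.length ∧ (dFun w).length = w.length := by
  intro w
  induction w with
  | nil => exact ⟨rfl, rfl, rfl⟩
  | cons x w ih =>
    rcases x with _ | _
    · simp [bFun, cFun, dFun, aFun_length w]
    · simp [bFun, cFun, dFun, ih.1, ih.2.1, ih.2.2]

theorem bFun_length : ∀ w, (bFun w).length = w.length := fun w => (bcd_length w).1
theorem cFun_length : ∀ w, (cFun w).length = w.length := fun w => (bcd_length w).2.1
theorem dFun_length : ∀ w, (dFun w).length = w.length := fun w => (bcd_length w).2.2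

/-- The generators of the first Grigorchuk group as permutations of the vertex set
`{0,1}*` of the rooted binary tree. -/
def aPerm : Equiv.Perm (List Bool) := aFun_involutive.toPerm
def bPerm : Equiv.Perm (List Bool) := bFun_involutive.toPerm
def cPerm : Equiv.Perm (List Bool) := cFun_involutive.toPerm
def dPerm : Equiv.Perm (List Bool) := dFun_involutive.toPerm

/-- The generating set `S = {a, b, c, d}` (a set of involutions). -/
def Sset : Set (Equiv.Perm (List Bool)) := {aPerm, bPerm, cPerm, dPerm}

/-- The first Grigorchuk group. -/
def Grigorchuk : Subgroup (Equiv.Perm (List Bool)) := Subgroup.closure Sset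

/-- Word length with respect to `S = {a, b, c, d}`. -/
def wordLength (g : Equiv.Perm (List Bool)) : ℕ :=
  sInf {k | ∃ l : List (Equiv.Perm (List Bool)),
    (∀ x ∈ l, x ∈ Sset) ∧ l.length = k ∧ l.prod = g}

/-- The growth function of the first Grigorchuk group with respect to `S`. -/
def growthGrig (m : ℕ) : ℕ :=
  Nat.card {g : Equiv.Perm (List Bool) |
    ∃ l : List (Equiv.Perm (List Bool)), (∀ x ∈ l, x ∈ Sset) ∧ l.length ≤ m ∧ l.prod = g}

/-! ### Level transfer -/

def levelFun (n : ℕ) (f : List Bool → List Bool) (v : Fin n → Bool) : Fin n → Bool :=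
  fun i => (f (List.ofFn v)).getD i false

theorem levelFun_involutive (n : ℕ) (f : List Bool → List Bool)
    (hlen : ∀ l, (f l).length = l.length) (hinv : Function.Involutive f) :
    Function.Involutive (levelFun n f) := by
  intro v
  have key : ∀ u : Fin n → Bool, List.ofFn (levelFun n f u) = f (List.ofFn u) := by
    intro u
    apply List.ext_getElem
    · simp [hlen]
    · intro i h1 h2
      simp only [List.getElem_ofFn]
      simp [levelFun, List.getD_eq_getElem, h2]
  funext i
  simp only [levelFun, key v, hinv (List.ofFn v)]
  simp [List.getD_eq_getElem]

/-- The images `a_n, b_n, c_n, d_n` of the Grigorchuk generators in `Sym(X_n)`,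
where the `n`-th level `X_n = {0,1}^n` is identified with `Fin n → Bool`. -/
def aLev (n : ℕ) : Equiv.Perm (Fin n → Bool) :=
  (levelFun_involutive n aFun aFun_length aFun_involutive).toPerm
def bLev (n : ℕ) : Equiv.Perm (Fin n → Bool) :=
  (levelFun_involutive n bFun bFun_length bFun_involutive).toPerm
def cLev (n : ℕ) : Equiv.Perm (Fin n → Bool) :=
  (levelFun_involutive n cFun cFun_length cFun_involutive).toPerm
def dLev (n : ℕ) : Equiv.Perm (Fin n → Bool) :=
  (levelFun_involutive n dFun dFun_length dFun_involutive).toPerm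

end Grig

/-! ### The boundary action and actions of words -/

/-- The (continuous extension to the boundary `∂T = {0,1}^ℕ` of the) action of a tree
automorphism on the boundary of the rooted binary tree. -/
def boundaryAct (g : Equiv.Perm (List Bool)) (ξ : ℕ → Bool) : ℕ → Bool :=
  fun n => (g (List.ofFn fun i : Fin (n + 1) => ξ i)).getD n false

/-- Applying a word of generators to a vertex, letter by letter: the right action of the
word `l` (the generators in `S` are involutions). -/
def wordApply (l : List (Equiv.Perm (List Bool))) (v : List Bool) : List Bool :=
  l.foldl (fun v s => s v) v

/-- The right action of a word on a boundary point. -/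
def wordApplyB (l : List (Equiv.Perm (List Bool))) (ξ : ℕ → Bool) : ℕ → Bool :=
  l.foldl (fun ξ s => boundaryAct s ξ) ξ

/-- The boundary point `ρ = 1^∞`. -/
def rhoInf : ℕ → Bool := fun _ => true

/-- The vertex `ρ_n = 1^n` of the `n`-th level. -/
def rhoVertex (n : ℕ) : List Bool := List.replicate n true

/-- The vertex `η_n = 1^{n-1}0` of the `n`-th level. -/
def etaVertex (n : ℕ) : List Bool := List.replicate (n - 1) true ++ [false]
/-! ### Inverted orbits of the Grigorchuk group on the orbit of `ρ = 1^∞` -/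

/-- The inverted orbit `O_ξ(l) = {ξ, ξ·s_ℓ, ξ·s_{ℓ-1}s_ℓ, …, ξ·s_1⋯s_ℓ}` of the word
`l = s_1 ⋯ s_ℓ` at the boundary point `ξ`. -/
def invOrbitB (l : List (Equiv.Perm (List Bool))) (ξ : ℕ → Bool) : Set (ℕ → Bool) :=
  {x | ∃ i : ℕ, x = wordApplyB (l.drop i) ξ}

/-- The inverted orbit growth function `Δ_ρ^S` of the Grigorchuk group acting on the
orbit of `ρ = 1^∞`. -/
noncomputable def DeltaB (m : ℕ) : ℕ :=
  sSup {k | ∃ l : List (Equiv.Perm (List Bool)),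
    (∀ x ∈ l, x ∈ Grig.Sset) ∧ l.length ≤ m ∧ k = Nat.card (invOrbitB l rhoInf)}

/-- The number `N_ρ^S(m)` of distinct inverted orbits of words of length at most `m`. -/
noncomputable def NorbB (m : ℕ) : ℕ :=
  Nat.card {O : Set (ℕ → Bool) | ∃ l : List (Equiv.Perm (List Bool)),
    (∀ x ∈ l, x ∈ Grig.Sset) ∧ l.length ≤ m ∧ O = invOrbitB l rhoInf}
/-! ### Inverted orbits of `G_n = π_n(G)` acting on the level `X_n` -/

/-- The inverted orbit of the word `l` at a vertex `v`. -/
def invOrbitL (l : List (Equiv.Perm (List Bool))) (v : List Bool) : Set (List Bool) :=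
  {x | ∃ i : ℕ, x = wordApply (l.drop i) v}

/-- The inverted orbit growth function `Δ_v^{S_n}` of `G_n` acting on the level `X_n`. -/
noncomputable def DeltaL (v : List Bool) (m : ℕ) : ℕ :=
  sSup {k | ∃ l : List (Equiv.Perm (List Bool)),
    (∀ x ∈ l, x ∈ Grig.Sset) ∧ l.length ≤ m ∧ k = Nat.card (invOrbitL l v)}

/-- The number `N_v^{S_n}(m)` of distinct inverted orbits at `v` of words of length at
most `m`. -/
noncomputable def NorbL (v : List Bool) (m : ℕ) : ℕ :=
  Nat.card {O : Set (List Bool) | ∃ l : List (Equiv.Perm (List Bool)),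
    (∀ x ∈ l, x ∈ Grig.Sset) ∧ l.length ≤ m ∧ O = invOrbitL l v}
/-! ### Auxiliary lemmas for the proof -/

namespace GrigAux

open Grig

/-! #### Generators commute with `take` -/

theorem aFun_take (w : List Bool) (m : ℕ) : (aFun w).take m = aFun (w.take m) := by
  match w, m with
  | [], m => simp [aFun]
  | x :: w, 0 => simp [aFun]
  | x :: w, m + 1 => simp [aFun]

theorem bcd_take (w : List Bool) : ∀ m : ℕ,
    (bFun w).take m = bFun (w.take m) ∧ (cFun w).take m = cFun (w.take m) ∧
      (dFun w).take m = dFun (w.take m) := by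
  induction w with
  | nil => intro m; simp [bFun, cFun, dFun]
  | cons x w ih =>
    intro m
    rcases m with _ | m
    · simp [bFun, cFun, dFun]
    · rcases x with _ | _
      · simp [bFun, cFun, dFun, aFun_take]
      · simp [bFun, cFun, dFun, (ih m).1, (ih m).2.1, (ih m).2.2]

theorem bFun_take (w : List Bool) (m : ℕ) : (bFun w).take m = bFun (w.take m) :=
  (bcd_take w m).1
theorem cFun_take (w : List Bool) (m : ℕ) : (cFun w).take m = cFun (w.take m) :=
  (bcd_take w m).2.1
theorem dFun_take (w : List Bool) (m : ℕ) : (dFun w).take m = dFun (w.take m) :=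
  (bcd_take w m).2.2

/-! #### Flipping the last letter -/

def flipLast : List Bool → List Bool
  | [] => []
  | [x] => [!x]
  | x :: y :: w => x :: flipLast (y :: w)

theorem aFun_flipLast (w : List Bool) : aFun (flipLast w) = flipLast (aFun w) := by
  match w with
  | [] => rfl
  | [x] => rfl
  | x :: y :: w => simp [aFun, flipLast]

theorem flipLast_cons (x : Bool) (l : List Bool) (h : l ≠ []) :
    flipLast (x :: l) = x :: flipLast l := by
  rcases l with _ | ⟨y, w⟩
  · exact absurd rfl h
  · rfl

theorem ne_nil_of_length_eq {l l' : List Bool} (h : l.length = l'.length) (h' : l' ≠ []) :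
    l ≠ [] := by
  intro hnil
  apply h'
  rw [← List.length_eq_zero_iff, ← h, hnil]
  rfl

theorem bcd_flipLast (w : List Bool) :
    bFun (flipLast w) = flipLast (bFun w) ∧ cFun (flipLast w) = flipLast (cFun w) ∧
      dFun (flipLast w) = flipLast (dFun w) := by
  induction w with
  | nil => exact ⟨rfl, rfl, rfl⟩
  | cons x t ih =>
    rcases t with _ | ⟨y, w'⟩
    · rcases x with _ | _ <;> exact ⟨rfl, rfl, rfl⟩
    · have hne : (y :: w' : List Bool) ≠ [] := by simp
      have ha : aFun (y :: w') ≠ [] := ne_nil_of_length_eq (aFun_length _) hne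
      have hb : bFun (y :: w') ≠ [] := ne_nil_of_length_eq (bFun_length _) hne
      have hc : cFun (y :: w') ≠ [] := ne_nil_of_length_eq (cFun_length _) hne
      have hd : dFun (y :: w') ≠ [] := ne_nil_of_length_eq (dFun_length _) hne
      rcases x with _ | _
      · refine ⟨?_, ?_, ?_⟩
        · rw [flipLast_cons false _ hne]
          show false :: aFun (flipLast (y :: w')) = flipLast (false :: aFun (y :: w'))
          rw [aFun_flipLast, flipLast_cons false _ ha]
        · rw [flipLast_cons false _ hne]
          show false :: aFun (flipLast (y :: w')) = flipLast (false :: aFun (y :: w'))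
          rw [aFun_flipLast, flipLast_cons false _ ha]
        · rw [flipLast_cons false _ hne]
          show false :: flipLast (y :: w') = flipLast (false :: (y :: w'))
          rw [flipLast_cons false _ hne]
      · refine ⟨?_, ?_, ?_⟩
        · rw [flipLast_cons true _ hne]
          show true :: cFun (flipLast (y :: w')) = flipLast (true :: cFun (y :: w'))
          rw [ih.2.1, flipLast_cons true _ hc]
        · rw [flipLast_cons true _ hne]
          show true :: dFun (flipLast (y :: w')) = flipLast (true :: dFun (y :: w'))
          rw [ih.2.2, flipLast_cons true _ hd]
        · rw [flipLast_cons true _ hne]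
          show true :: bFun (flipLast (y :: w')) = flipLast (true :: bFun (y :: w'))
          rw [ih.1, flipLast_cons true _ hb]

theorem flipLast_replicate : ∀ n : ℕ,
    flipLast (List.replicate (n + 1) true) = List.replicate n true ++ [false]
  | 0 => rfl
  | n + 1 => by
    rw [List.replicate_succ, flipLast_cons true _ (by simp), flipLast_replicate n,
      List.replicate_succ]
    rfl

theorem eta_eq_flipLast_rho (n : ℕ) (hn : 1 ≤ n) :
    etaVertex n = flipLast (rhoVertex n) := by
  rcases n with _ | m
  · omega
  · show etaVertex (m + 1) = flipLast (List.replicate (m + 1) true)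
    rw [flipLast_replicate m]
    rfl

/-! #### Truncation of boundary points -/

def trunc (n : ℕ) (ξ : ℕ → Bool) : List Bool := List.ofFn (fun i : Fin n => ξ i)

theorem trunc_take (n m : ℕ) (hm : m ≤ n) (ξ : ℕ → Bool) :
    (trunc n ξ).take m = trunc m ξ := by
  apply List.ext_getElem
  · simp [trunc]; omega
  · intro i h1 h2
    simp [trunc]

theorem trunc_rhoInf (n : ℕ) : trunc n rhoInf = rhoVertex n := by
  simp [trunc, rhoInf, rhoVertex, List.ofFn_const]

theorem trunc_boundary (f : List Bool → List Bool)
    (hlen : ∀ l, (f l).length = l.length)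
    (htake : ∀ l m, (f l).take m = f (l.take m))
    (ξ : ℕ → Bool) (n : ℕ) :
    trunc n (fun m => (f (List.ofFn fun i : Fin (m + 1) => ξ i)).getD m false)
      = f (trunc n ξ) := by
  apply List.ext_getElem
  · simp [trunc, hlen]
  · intro i h1 h2
    have hi : i < n := by simpa [trunc] using h1
    have e1 : (List.ofFn fun j : Fin (i + 1) => ξ j) = (trunc n ξ).take (i + 1) := by
      rw [trunc_take n (i + 1) (by omega)]; rfl
    have hlen2 : i < ((f (trunc n ξ)).take (i + 1)).length := by
      simp [hlen, trunc]; omega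
    simp only [trunc, List.getElem_ofFn]
    rw [e1, ← htake]
    rw [List.getD_eq_getElem _ _ hlen2, List.getElem_take]
    rfl

theorem trunc_boundaryAct {s : Equiv.Perm (List Bool)} (hs : s ∈ Grig.Sset)
    (ξ : ℕ → Bool) (n : ℕ) :
    trunc n (boundaryAct s ξ) = s (trunc n ξ) := by
  have hmem : s = aPerm ∨ s = bPerm ∨ s = cPerm ∨ s = dPerm := by
    simpa [Grig.Sset] using hs
  rcases hmem with rfl | rfl | rfl | rfl
  · show trunc n (fun m => (aPerm (List.ofFn fun i : Fin (m + 1) => ξ i)).getD m false) = _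
    simp only [aPerm, Function.Involutive.coe_toPerm]
    exact trunc_boundary aFun aFun_length aFun_take ξ n
  · show trunc n (fun m => (bPerm (List.ofFn fun i : Fin (m + 1) => ξ i)).getD m false) = _
    simp only [bPerm, Function.Involutive.coe_toPerm]
    exact trunc_boundary bFun bFun_length bFun_take ξ n
  · show trunc n (fun m => (cPerm (List.ofFn fun i : Fin (m + 1) => ξ i)).getD m false) = _
    simp only [cPerm, Function.Involutive.coe_toPerm]
    exact trunc_boundary cFun cFun_length cFun_take ξ n
  · show trunc n (fun m => (dPerm (List.ofFn fun i : Fin (m + 1) => ξ i)).getD m false) = _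
    simp only [dPerm, Function.Involutive.coe_toPerm]
    exact trunc_boundary dFun dFun_length dFun_take ξ n

theorem flipLast_perm {s : Equiv.Perm (List Bool)} (hs : s ∈ Grig.Sset) (v : List Bool) :
    s (flipLast v) = flipLast (s v) := by
  have hmem : s = aPerm ∨ s = bPerm ∨ s = cPerm ∨ s = dPerm := by
    simpa [Grig.Sset] using hs
  rcases hmem with rfl | rfl | rfl | rfl
  · simpa [aPerm, Function.Involutive.coe_toPerm] using aFun_flipLast v
  · simpa [bPerm, Function.Involutive.coe_toPerm] using (bcd_flipLast v).1
  · simpa [cPerm, Function.Involutive.coe_toPerm] using (bcd_flipLast v).2.1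
  · simpa [dPerm, Function.Involutive.coe_toPerm] using (bcd_flipLast v).2.2

theorem trunc_wordApplyB : ∀ (l : List (Equiv.Perm (List Bool)))
    (_ : ∀ x ∈ l, x ∈ Grig.Sset) (ξ : ℕ → Bool) (n : ℕ),
    trunc n (wordApplyB l ξ) = wordApply l (trunc n ξ)
  | [], _, ξ, n => rfl
  | s :: l, hl, ξ, n => by
    show trunc n (wordApplyB l (boundaryAct s ξ)) = wordApply l (s (trunc n ξ))
    rw [trunc_wordApplyB l (fun x hx => hl x (List.mem_cons_of_mem _ hx)) (boundaryAct s ξ) n,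
      trunc_boundaryAct (hl s List.mem_cons_self) ξ n]

theorem wordApply_flipLast : ∀ (l : List (Equiv.Perm (List Bool)))
    (_ : ∀ x ∈ l, x ∈ Grig.Sset) (v : List Bool),
    wordApply l (flipLast v) = flipLast (wordApply l v)
  | [], _, v => rfl
  | s :: l, hl, v => by
    show wordApply l (s (flipLast v)) = flipLast (wordApply l (s v))
    rw [flipLast_perm (hl s List.mem_cons_self) v,
      wordApply_flipLast l (fun x hx => hl x (List.mem_cons_of_mem _ hx)) (s v)]

end GrigAux

namespace GrigAux

open Grig

/-! #### Finiteness and cardinality of inverted orbits -/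

theorem invOrbitB_subset_range (l : List (Equiv.Perm (List Bool))) (ξ : ℕ → Bool) :
    invOrbitB l ξ ⊆
      Set.range (fun i : Fin (l.length + 1) => wordApplyB (l.drop (i : ℕ)) ξ) := by
  rintro x ⟨i, rfl⟩
  rcases le_or_gt i l.length with h | h
  · exact ⟨⟨i, by omega⟩, rfl⟩
  · refine ⟨⟨l.length, by omega⟩, ?_⟩
    show wordApplyB (l.drop l.length) ξ = wordApplyB (l.drop i) ξ
    rw [List.drop_length, List.drop_eq_nil_of_le (by omega : l.length ≤ i)]

theorem invOrbitB_finite (l : List (Equiv.Perm (List Bool))) (ξ : ℕ → Bool) :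
    (invOrbitB l ξ).Finite :=
  Set.Finite.subset (Set.finite_range _) (invOrbitB_subset_range l ξ)

theorem card_range_le' {α β : Type*} [Finite α] (f : α → β) :
    Nat.card (Set.range f) ≤ Nat.card α := by
  rw [← Set.image_univ]
  calc Nat.card (f '' Set.univ) ≤ Nat.card (Set.univ : Set α) :=
        Nat.card_image_le Set.finite_univ
    _ = Nat.card α := by rw [Nat.card_coe_set_eq, Set.ncard_univ]

theorem card_invOrbitB_le (l : List (Equiv.Perm (List Bool))) (ξ : ℕ → Bool) :
    Nat.card (invOrbitB l ξ) ≤ l.length + 1 := by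
  calc Nat.card (invOrbitB l ξ)
      ≤ Nat.card (Set.range (fun i : Fin (l.length + 1) => wordApplyB (l.drop (i : ℕ)) ξ)) :=
        Nat.card_mono (Set.finite_range _) (invOrbitB_subset_range l ξ)
    _ ≤ Nat.card (Fin (l.length + 1)) := card_range_le' _
    _ = l.length + 1 := by simp

/-! #### Orbit identifications -/

theorem invOrbitL_rho (l : List (Equiv.Perm (List Bool)))
    (hl : ∀ x ∈ l, x ∈ Grig.Sset) (n : ℕ) :
    invOrbitL l (rhoVertex n) = trunc n '' invOrbitB l rhoInf := by
  ext x
  constructor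
  · rintro ⟨i, rfl⟩
    refine ⟨wordApplyB (l.drop i) rhoInf, ⟨i, rfl⟩, ?_⟩
    rw [trunc_wordApplyB _ (fun x hx => hl x (List.mem_of_mem_drop hx)) _ n, trunc_rhoInf]
  · rintro ⟨ξ, ⟨i, rfl⟩, rfl⟩
    refine ⟨i, ?_⟩
    rw [trunc_wordApplyB _ (fun x hx => hl x (List.mem_of_mem_drop hx)) _ n, trunc_rhoInf]

theorem invOrbitL_eta (l : List (Equiv.Perm (List Bool)))
    (hl : ∀ x ∈ l, x ∈ Grig.Sset) (n : ℕ) (hn : 1 ≤ n) :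
    invOrbitL l (etaVertex n) = flipLast '' invOrbitL l (rhoVertex n) := by
  ext x
  constructor
  · rintro ⟨i, rfl⟩
    refine ⟨wordApply (l.drop i) (rhoVertex n), ⟨i, rfl⟩, ?_⟩
    rw [← wordApply_flipLast _ (fun x hx => hl x (List.mem_of_mem_drop hx)),
      ← eta_eq_flipLast_rho n hn]
  · rintro ⟨y, ⟨i, rfl⟩, rfl⟩
    refine ⟨i, ?_⟩
    rw [← wordApply_flipLast _ (fun x hx => hl x (List.mem_of_mem_drop hx)),
      ← eta_eq_flipLast_rho n hn]

theorem card_invOrbitL_le (l : List (Equiv.Perm (List Bool)))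
    (hl : ∀ x ∈ l, x ∈ Grig.Sset) {v : List Bool} {n : ℕ}
    (hv : v = rhoVertex n ∨ (v = etaVertex n ∧ 1 ≤ n)) :
    Nat.card (invOrbitL l v) ≤ Nat.card (invOrbitB l rhoInf) := by
  have hrho : Nat.card (invOrbitL l (rhoVertex n)) ≤ Nat.card (invOrbitB l rhoInf) := by
    rw [invOrbitL_rho l hl n]
    exact Nat.card_image_le (invOrbitB_finite l rhoInf)
  rcases hv with rfl | ⟨rfl, hn⟩
  · exact hrho
  · rw [invOrbitL_eta l hl n hn]
    refine le_trans (Nat.card_image_le ?_) hrho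
    rw [invOrbitL_rho l hl n]
    exact Set.Finite.image _ (invOrbitB_finite l rhoInf)

/-! #### Finiteness of word sets and orbit collections -/

theorem Sset_finite : Grig.Sset.Finite := by
  unfold Grig.Sset
  exact (((Set.finite_singleton _).insert _).insert _).insert _

theorem words_finite (k : ℕ) :
    {l : List (Equiv.Perm (List Bool)) | (∀ x ∈ l, x ∈ Grig.Sset) ∧ l.length ≤ k}.Finite := by
  have : Finite ↥Grig.Sset := Sset_finite.to_subtype
  apply Set.Finite.subset
    (Set.Finite.image (List.map (Subtype.val : ↥Grig.Sset → _))
      (List.finite_length_le ↥Grig.Sset k))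
  rintro l ⟨hl, hlen⟩
  refine ⟨l.attach.map (fun x => (⟨x.1, hl x.1 x.2⟩ : ↥Grig.Sset)), by simpa using hlen, ?_⟩
  rw [List.map_map]
  exact List.attach_map_subtype_val l

theorem collB_finite (k : ℕ) :
    {O : Set (ℕ → Bool) | ∃ l : List (Equiv.Perm (List Bool)),
      (∀ x ∈ l, x ∈ Grig.Sset) ∧ l.length ≤ k ∧ O = invOrbitB l rhoInf}.Finite := by
  apply Set.Finite.subset (Set.Finite.image (fun l => invOrbitB l rhoInf) (words_finite k))
  rintro O ⟨l, h1, h2, rfl⟩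
  exact ⟨l, ⟨h1, h2⟩, rfl⟩

theorem collL_rho_eq (k n : ℕ) :
    {O : Set (List Bool) | ∃ l : List (Equiv.Perm (List Bool)),
      (∀ x ∈ l, x ∈ Grig.Sset) ∧ l.length ≤ k ∧ O = invOrbitL l (rhoVertex n)} =
    Set.image (trunc n) ''
      {O : Set (ℕ → Bool) | ∃ l : List (Equiv.Perm (List Bool)),
        (∀ x ∈ l, x ∈ Grig.Sset) ∧ l.length ≤ k ∧ O = invOrbitB l rhoInf} := by
  ext O
  constructor
  · rintro ⟨l, h1, h2, rfl⟩
    exact ⟨invOrbitB l rhoInf, ⟨l, h1, h2, rfl⟩, (invOrbitL_rho l h1 n).symm⟩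
  · rintro ⟨O', ⟨l, h1, h2, rfl⟩, rfl⟩
    exact ⟨l, h1, h2, (invOrbitL_rho l h1 n).symm⟩

theorem collL_eta_eq (k n : ℕ) (hn : 1 ≤ n) :
    {O : Set (List Bool) | ∃ l : List (Equiv.Perm (List Bool)),
      (∀ x ∈ l, x ∈ Grig.Sset) ∧ l.length ≤ k ∧ O = invOrbitL l (etaVertex n)} =
    Set.image flipLast ''
      {O : Set (List Bool) | ∃ l : List (Equiv.Perm (List Bool)),
        (∀ x ∈ l, x ∈ Grig.Sset) ∧ l.length ≤ k ∧ O = invOrbitL l (rhoVertex n)} := by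
  ext O
  constructor
  · rintro ⟨l, h1, h2, rfl⟩
    exact ⟨invOrbitL l (rhoVertex n), ⟨l, h1, h2, rfl⟩, (invOrbitL_eta l h1 n hn).symm⟩
  · rintro ⟨O', ⟨l, h1, h2, rfl⟩, rfl⟩
    exact ⟨l, h1, h2, (invOrbitL_eta l h1 n hn).symm⟩

/-! #### The two transfer inequalities -/

theorem DeltaL_le_DeltaB {v : List Bool} {n : ℕ}
    (hv : v = rhoVertex n ∨ (v = etaVertex n ∧ 1 ≤ n)) (k : ℕ) :
    DeltaL v k ≤ DeltaB k := by
  have hbdd : BddAbove {k' | ∃ l : List (Equiv.Perm (List Bool)),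
      (∀ x ∈ l, x ∈ Grig.Sset) ∧ l.length ≤ k ∧ k' = Nat.card (invOrbitB l rhoInf)} := by
    refine ⟨k + 1, ?_⟩
    rintro b ⟨l, hl, hlen, rfl⟩
    exact le_trans (card_invOrbitB_le l rhoInf) (by omega)
  apply csSup_le
  · exact ⟨Nat.card (invOrbitL ([] : List (Equiv.Perm (List Bool))) v),
      [], by simp, by simp, rfl⟩
  · rintro b ⟨l, hl, hlen, rfl⟩
    exact le_trans (card_invOrbitL_le l hl hv)
      (le_csSup hbdd ⟨l, hl, hlen, rfl⟩)

theorem NorbL_le_NorbB {v : List Bool} {n : ℕ}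
    (hv : v = rhoVertex n ∨ (v = etaVertex n ∧ 1 ≤ n)) (k : ℕ) :
    NorbL v k ≤ NorbB k := by
  have hrho : NorbL (rhoVertex n) k ≤ NorbB k := by
    unfold NorbL NorbB
    rw [collL_rho_eq k n]
    exact Nat.card_image_le (collB_finite k)
  rcases hv with rfl | ⟨rfl, hn⟩
  · exact hrho
  · refine le_trans ?_ hrho
    unfold NorbL
    rw [collL_eta_eq k n hn]
    apply Nat.card_image_le
    rw [collL_rho_eq k n]
    exact Set.Finite.image _ (collB_finite k)

end GrigAux
/-- **Transfer of the Bartholdi–Erschler bounds to the finite levels:** if `Δ_ρ^S(m) ≤ C m^α`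
and `N_ρ^S(m) ≤ exp(C m^α)` for all `m ≥ 1`, then for all sufficiently large `n`, for both
base points `ξ_n ∈ {ρ_n, η_n}` and every `k ≤ r_n = 2^⌊n/2⌋`, the inverted orbit growth
of the action of `G_n` on the level `X_n` with respect to `S_n` satisfies
`Δ_{ξ_n}^{S_n}(k) ≤ C k^α` and `N_{ξ_n}^{S_n}(k) ≤ exp(C k^α)`. -/
theorem bartholdi_erschler_finite_levels (C α : ℝ) (hC : 0 < C) (hα₀ : 0 < α) (hα₁ : α < 1)
    (hyp : ∀ m : ℕ, 1 ≤ m →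
      (DeltaB m : ℝ) ≤ C * (m : ℝ) ^ α ∧ (NorbB m : ℝ) ≤ Real.exp (C * (m : ℝ) ^ α)) :
    ∃ N : ℕ, ∀ n : ℕ, N ≤ n →
      ∀ v ∈ ({rhoVertex n, etaVertex n} : Set (List Bool)),
      ∀ k : ℕ, 1 ≤ k → k ≤ 2 ^ (n / 2) →
        (DeltaL v k : ℝ) ≤ C * (k : ℝ) ^ α ∧
        (NorbL v k : ℝ) ≤ Real.exp (C * (k : ℝ) ^ α) := by
  refine ⟨1, fun n hn v hv k hk1 _ => ?_⟩
  have hv2 : v = rhoVertex n ∨ v = etaVertex n := by simpa using hv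
  have hv' : v = rhoVertex n ∨ (v = etaVertex n ∧ 1 ≤ n) := by
    rcases hv2 with rfl | rfl
    · exact Or.inl rfl
    · exact Or.inr ⟨rfl, hn⟩
  obtain ⟨h1, h2⟩ := hyp k hk1
  exact ⟨le_trans (Nat.cast_le.mpr (GrigAux.DeltaL_le_DeltaB hv' k)) h1,
    le_trans (Nat.cast_le.mpr (GrigAux.NorbL_le_NorbB hv' k)) h2⟩

end
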